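/- For the (continuous) standard Laplace distribution Lap(0,t) with density f(x) = (1/(2t)) e^{-|x|/t}, the Rényi divergence of order α > 1 between Lap(0,t) and its shift Lap(s,t) (for s > 0) is D_α = (1/(α-1)) log( (α/(2α-1)) e^{(α-1)s/t} + ((α-1)/(2α-1)) e^{-αs/t} ). -/

import Mathlib

open Real Set MeasureTheory

lemma my_exp_integral_Ioi (k a : ℝ) (hk : 0 < k) :
    ∫ x in Ioi a, Real.exp (-(k * x)) = Real.exp (-(k * a)) / k := by
  have h := MeasureTheory.integral_comp_mul_left_Ioi (fun x => Real.exp (-x)) a hk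
  simp only [integral_exp_neg_Ioi, smul_eq_mul] at h
  rw [h]; field_simp

lemma my_exp_integrableOn_Ioi (k a : ℝ) (hk : 0 < k) :
    IntegrableOn (fun x => Real.exp (-(k * x))) (Ioi a) := by
  simpa [neg_mul] using exp_neg_integrableOn_Ioi a hk

lemma my_exp_integrableOn_Iic (k : ℝ) (hk : 0 < k) :
    IntegrableOn (fun x => Real.exp (k * x)) (Iic (0:ℝ)) := by
  have h : IntegrableOn (fun x => Real.exp (-(k * x))) (Ioi (0:ℝ)) :=
    my_exp_integrableOn_Ioi k 0 hk
  have h2 := (MeasurePreserving.integrableOn_comp_preimage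
      (Measure.measurePreserving_neg (volume : Measure ℝ))
      (Homeomorph.neg ℝ).measurableEmbedding).2 h
  rw [integrableOn_Iic_iff_integrableOn_Iio]
  have hs : (Neg.neg ⁻¹' Ioi (0:ℝ) : Set ℝ) = Iio 0 := by
    ext x; simp
  rw [hs] at h2
  exact h2.congr_fun (fun x _ => by simp [Function.comp]) measurableSet_Iio

lemma my_exp_integral_Iic (k : ℝ) (hk : 0 < k) :
    ∫ x in Iic (0:ℝ), Real.exp (k * x) = 1 / k := by
  have h := integral_comp_neg_Ioi (c := (0:ℝ)) (f := fun x => Real.exp (k * x))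
  simp only [neg_zero, mul_neg, ← neg_mul] at h
  rw [← h]
  simpa using my_exp_integral_Ioi k 0 hk

/-- Closed-form Rényi divergence of order `α > 1` between `Lap(0,t)` and `Lap(s,t)`. -/
theorem renyi_divergence_laplace (t s α : ℝ) (ht : 0 < t) (hs : 0 < s) (hα : 1 < α)
    (f : ℝ → ℝ) (hf : ∀ x, f x = (1 / (2 * t)) * Real.exp (-|x| / t)) :
    (α - 1)⁻¹ * Real.log (∫ x : ℝ, f x ^ α * f (x - s) ^ (1 - α))
      = (α - 1)⁻¹ * Real.log
          ((α / (2 * α - 1)) * Real.exp ((α - 1) * s / t)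
            + ((α - 1) / (2 * α - 1)) * Real.exp (-α * s / t)) := by
  have ht' : t ≠ 0 := ne_of_gt ht
  have h2α : 0 < 2 * α - 1 := by linarith
  set c : ℝ := 1 / (2 * t) with hc
  have hcpos : 0 < c := by positivity
  set A : ℝ := Real.exp ((α - 1) * s / t) with hA
  set B : ℝ := Real.exp (-α * s / t) with hB
  set g : ℝ → ℝ := fun x => c * Real.exp ((-(α * |x|) - (1 - α) * |x - s|) / t) with hgdef
  have key : ∀ x : ℝ, f x ^ α * f (x - s) ^ (1 - α) = g x := by
    intro x
    rw [hf x, hf (x - s)]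
    rw [Real.mul_rpow hcpos.le (Real.exp_pos _).le,
        Real.mul_rpow hcpos.le (Real.exp_pos _).le,
        ← Real.exp_mul, ← Real.exp_mul]
    have e1 : c ^ α * c ^ (1 - α) = c := by
      rw [← Real.rpow_add hcpos]; norm_num
    calc c ^ α * Real.exp (-|x| / t * α) * (c ^ (1 - α) * Real.exp (-|x - s| / t * (1 - α)))
        = (c ^ α * c ^ (1 - α)) *
            (Real.exp (-|x| / t * α) * Real.exp (-|x - s| / t * (1 - α))) := by ring
      _ = g x := by
          rw [e1, ← Real.exp_add, hgdef]; congr 1; field_simp; ring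
  have hk1 : (0:ℝ) < 1 / t := by positivity
  set k : ℝ := (2 * α - 1) / t with hkdef
  have hk : 0 < k := by positivity
  have eq1 : EqOn g (fun x => (c * A) * Real.exp ((1 / t) * x)) (Iic 0) := by
    intro x hx
    simp only [mem_Iic] at hx
    have h1 : |x| = -x := abs_of_nonpos hx
    have h2 : |x - s| = -(x - s) := abs_of_nonpos (by linarith)
    simp only [hgdef, h1, h2, hA]
    rw [mul_assoc, ← Real.exp_add]
    congr 1
    field_simp
    ring
  have eq2 : EqOn g (fun x => (c * A) * Real.exp (-(k * x))) (Ioc 0 s) := by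
    intro x hx
    simp only [mem_Ioc] at hx
    have h1 : |x| = x := abs_of_nonneg hx.1.le
    have h2 : |x - s| = -(x - s) := abs_of_nonpos (by linarith [hx.2])
    simp only [hgdef, h1, h2, hA, hkdef]
    rw [mul_assoc, ← Real.exp_add]
    congr 1
    field_simp
    ring
  have eq3 : EqOn g
      (fun x => (c * Real.exp (-(α - 1) * s / t)) * Real.exp (-((1 / t) * x))) (Ioi s) := by
    intro x hx
    simp only [mem_Ioi] at hx
    have h1 : |x| = x := abs_of_nonneg (by linarith)
    have h2 : |x - s| = x - s := abs_of_nonneg (by linarith)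
    simp only [hgdef, h1, h2]
    rw [mul_assoc, ← Real.exp_add]
    congr 1
    field_simp
    ring
  have hI1 : IntegrableOn g (Iic 0) :=
    MeasureTheory.IntegrableOn.congr_fun
      ((my_exp_integrableOn_Iic (1 / t) hk1).const_mul (c * A))
      (fun x hx => (eq1 hx).symm) measurableSet_Iic
  have hI2 : IntegrableOn g (Ioc 0 s) :=
    MeasureTheory.IntegrableOn.congr_fun
      (((my_exp_integrableOn_Ioi k 0 hk).mono_set Ioc_subset_Ioi_self).const_mul (c * A))
      (fun x hx => (eq2 hx).symm) measurableSet_Ioc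
  have hI3 : IntegrableOn g (Ioi s) :=
    MeasureTheory.IntegrableOn.congr_fun
      ((my_exp_integrableOn_Ioi (1 / t) s hk1).const_mul (c * Real.exp (-(α - 1) * s / t)))
      (fun x hx => (eq3 hx).symm) measurableSet_Ioi
  have hdisj : Disjoint (Ioc 0 s) (Ioi s) := Ioc_disjoint_Ioi le_rfl
  have hunion : Ioc 0 s ∪ Ioi s = Ioi (0:ℝ) := Ioc_union_Ioi_eq_Ioi hs.le
  have hIpos : IntegrableOn g (Ioi 0) := by
    rw [← hunion]; exact hI2.union hI3
  have eB1 : A * Real.exp (-(k * s)) = B := by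
    rw [hA, hB, hkdef, ← Real.exp_add]; congr 1; field_simp; ring
  have eB2 : Real.exp (-(α - 1) * s / t) * Real.exp (-((1 / t) * s)) = B := by
    rw [hB, ← Real.exp_add]; congr 1; field_simp; ring
  have v1 : ∫ x in Iic (0:ℝ), g x = (c * A) * t := by
    rw [setIntegral_congr_fun measurableSet_Iic eq1, integral_const_mul,
      my_exp_integral_Iic (1 / t) hk1]
    field_simp
  have v2 : ∫ x in Ioc (0:ℝ) s, g x = (c * A) * (1 / k - Real.exp (-(k * s)) / k) := by
    rw [setIntegral_congr_fun measurableSet_Ioc eq2, integral_const_mul]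
    have hsplit : (∫ x in Ioc (0:ℝ) s, Real.exp (-(k * x)))
        + ∫ x in Ioi s, Real.exp (-(k * x)) = ∫ x in Ioi (0:ℝ), Real.exp (-(k * x)) := by
      rw [← hunion, MeasureTheory.setIntegral_union hdisj measurableSet_Ioi
        ((my_exp_integrableOn_Ioi k 0 hk).mono_set Ioc_subset_Ioi_self)
        (my_exp_integrableOn_Ioi k s hk)]
    rw [my_exp_integral_Ioi k 0 hk, my_exp_integral_Ioi k s hk] at hsplit
    have h0 : Real.exp (-(k * 0)) = 1 := by norm_num
    rw [h0] at hsplit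
    have : (∫ x in Ioc (0:ℝ) s, Real.exp (-(k * x)))
        = 1 / k - Real.exp (-(k * s)) / k := by
      field_simp at hsplit ⊢
      linarith [hsplit]
    rw [this]
  have v3 : ∫ x in Ioi s, g x = c * t * B := by
    rw [setIntegral_congr_fun measurableSet_Ioi eq3, integral_const_mul,
      my_exp_integral_Ioi (1 / t) s hk1]
    rw [← eB2]
    field_simp
  have hint : ∫ x : ℝ, g x
      = (c * A) * t + ((c * A) * (1 / k - Real.exp (-(k * s)) / k) + c * t * B) := by
    rw [← intervalIntegral.integral_Iic_add_Ioi hI1 hIpos, v1, ← hunion,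
      MeasureTheory.setIntegral_union hdisj measurableSet_Ioi hI2 hI3, v2, v3]
  have final : (c * A) * t + ((c * A) * (1 / k - Real.exp (-(k * s)) / k) + c * t * B)
      = (α / (2 * α - 1)) * A + ((α - 1) / (2 * α - 1)) * B := by
    have hk' : k ≠ 0 := ne_of_gt hk
    have h2α' : (2 * α - 1) ≠ 0 := ne_of_gt h2α
    have eB1' : A * Real.exp (-((2 * α - 1) * s) / t) = B := by
      rw [hA, hB, ← Real.exp_add]; congr 1; field_simp; ring
    rw [hc, hkdef]
    field_simp
    have eB1'' : A * Real.exp (-((2 * α - 1) * s / t)) = B := by rw [← neg_div]; exact eB1'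
    linear_combination -eB1''
  have hintegral : (∫ x : ℝ, f x ^ α * f (x - s) ^ (1 - α))
      = (α / (2 * α - 1)) * A + ((α - 1) / (2 * α - 1)) * B := by
    simp_rw [key]
    rw [hint, final]
  rw [hintegral]
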